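/- The fractional chromatic number of the unit-distance graph on ℝ² is at least 7/2. -/

import Mathlib

/-- A fractional coloring of a finite graph `G` assigns nonnegative weights to
(independent) finsets of vertices so that every vertex is covered by total
weight at least 1.  `fracChromNum G` is the infimum of the total weight. -/
noncomputable def fracChromNum {V : Type*} [Fintype V] [DecidableEq V]
    (G : SimpleGraph V) : ℝ :=
  sInf {t : ℝ | ∃ w : Finset V → ℝ,
    (∀ S, 0 ≤ w S) ∧
    (∀ S, w S ≠ 0 → ∀ u ∈ S, ∀ v ∈ S, ¬ G.Adj u v) ∧
    (∀ v : V, 1 ≤ ∑ S ∈ Finset.univ.filter (fun S => v ∈ S), w S) ∧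
    (∑ S : Finset V, w S = t)}

/-- The unit-distance graph on the Euclidean plane `ℝ²`. -/
def planeGraph : SimpleGraph (EuclideanSpace ℝ (Fin 2)) where
  Adj x y := dist x y = 1
  symm := ⟨fun x y h => by show dist y x = 1; rw [dist_comm]; exact h⟩
  loopless := ⟨fun x h => by simp at h⟩

/-- The fractional chromatic number of the unit-distance graph on `ℝ²`,
defined as the supremum over all finite induced subgraphs. -/
noncomputable def planeFracChrom : ℝ :=
  letI : DecidableEq (EuclideanSpace ℝ (Fin 2)) := Classical.decEq _
  ⨆ s : Finset (EuclideanSpace ℝ (Fin 2)),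
    fracChromNum (planeGraph.induce (s : Set (EuclideanSpace ℝ (Fin 2))))

/-! ### General lemmas about `fracChromNum` -/

open Finset

lemma fracChromNum_le_of_coloring {V : Type*} [Fintype V] [DecidableEq V]
    (G : SimpleGraph V) {n : ℕ} (c : V → Fin n)
    (hc : ∀ u v, G.Adj u v → c u ≠ c v) :
    fracChromNum G ≤ n := by
  classical
  set w : Finset V → ℝ :=
    fun S => ((Finset.univ.filter (fun k : Fin n =>
      Finset.univ.filter (fun v => c v = k) = S)).card : ℝ) with hw
  apply csInf_le
  · exact ⟨0, fun t ⟨w', h0, _, _, ht⟩ => ht ▸ Finset.sum_nonneg fun S _ => h0 S⟩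
  refine ⟨w, fun S => by positivity, ?_, ?_, ?_⟩
  · intro S hS u hu v hv hadj
    have : (Finset.univ.filter (fun k : Fin n =>
        Finset.univ.filter (fun x => c x = k) = S)).Nonempty := by
      by_contra h
      rw [Finset.not_nonempty_iff_eq_empty] at h
      simp [hw, h] at hS
    obtain ⟨k, hk⟩ := this
    simp only [Finset.mem_filter] at hk
    have hu' : c u = k := (Finset.mem_filter.mp
      (hk.2.symm ▸ hu : u ∈ Finset.univ.filter (fun x => c x = k))).2
    have hv' : c v = k := (Finset.mem_filter.mp
      (hk.2.symm ▸ hv : v ∈ Finset.univ.filter (fun x => c x = k))).2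
    exact hc u v hadj (hu'.trans hv'.symm)
  · intro v
    set S0 : Finset V := Finset.univ.filter (fun x => c x = c v) with hS0
    have hvS0 : v ∈ S0 := by simp [hS0]
    have h1 : (1 : ℝ) ≤ w S0 := by
      have : c v ∈ Finset.univ.filter (fun k : Fin n =>
          Finset.univ.filter (fun x => c x = k) = S0) := by simp [hS0]
      have := Finset.card_pos.mpr ⟨c v, this⟩
      simp only [hw]
      exact_mod_cast this
    calc (1:ℝ) ≤ w S0 := h1
      _ ≤ ∑ S ∈ Finset.univ.filter (fun S => v ∈ S), w S := by
          apply Finset.single_le_sum (fun S _ => by positivity)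
          simp [hvS0]
  · simp only [hw, ← Nat.cast_sum]
    norm_cast
    have := Finset.card_eq_sum_card_fiberwise
        (f := fun k : Fin n => Finset.univ.filter (fun v => c v = k))
        (s := Finset.univ) (t := Finset.univ) (fun k _ => Finset.mem_univ _)
    rw [Finset.card_univ, Fintype.card_fin] at this
    exact this.symm

lemma fracChromNum_ge_of_indep_le_two {V : Type*} [Fintype V] [DecidableEq V]
    (G : SimpleGraph V)
    (hind : ∀ S : Finset V, (∀ u ∈ S, ∀ v ∈ S, ¬ G.Adj u v) → S.card ≤ 2) :
    (Fintype.card V : ℝ) / 2 ≤ fracChromNum G := by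
  apply le_csInf
  · refine ⟨∑ S : Finset V, (if S.card = 1 then (1:ℝ) else 0),
      fun S => if S.card = 1 then (1:ℝ) else 0,
      fun S => by dsimp only; split <;> norm_num, ?_, ?_, rfl⟩
    · intro S hS u hu v hv hadj
      have h1 : S.card = 1 := by by_contra h; simp [h] at hS
      obtain ⟨x, hx⟩ := Finset.card_eq_one.mp h1
      subst hx
      simp only [Finset.mem_singleton] at hu hv
      subst hu; subst hv
      exact G.irrefl hadj
    · intro v
      have hmem : {v} ∈ Finset.univ.filter (fun S : Finset V => v ∈ S) := by simp
      calc (1:ℝ) = (if ({v} : Finset V).card = 1 then (1:ℝ) else 0) := by simp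
        _ ≤ _ := Finset.single_le_sum
            (f := fun S : Finset V => if S.card = 1 then (1:ℝ) else 0)
            (fun S _ => by split <;> norm_num) hmem
  · rintro t ⟨w, h0, hindw, hcov, ht⟩
    have key : (Fintype.card V : ℝ) ≤ 2 * t := by
      have step1 : (Fintype.card V : ℝ) ≤
          ∑ v : V, ∑ S ∈ Finset.univ.filter (fun S => v ∈ S), w S := by
        rw [← Finset.card_univ, Finset.card_eq_sum_ones]
        push_cast
        exact Finset.sum_le_sum fun v _ => hcov v
      have step2 : ∑ v : V, ∑ S ∈ Finset.univ.filter (fun S => v ∈ S), w S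
          = ∑ S : Finset V, (S.card : ℝ) * w S := by
        simp only [Finset.sum_filter]
        rw [Finset.sum_comm]
        refine Finset.sum_congr rfl fun S _ => ?_
        rw [Finset.sum_ite_mem, Finset.univ_inter, Finset.sum_const, nsmul_eq_mul]
      have step3 : ∑ S : Finset V, (S.card : ℝ) * w S ≤ ∑ S : Finset V, 2 * w S := by
        refine Finset.sum_le_sum fun S _ => ?_
        by_cases hS : w S = 0
        · simp [hS]
        · have := hind S (hindw S hS)
          have h2 : (S.card : ℝ) ≤ 2 := by exact_mod_cast this
          exact mul_le_mul_of_nonneg_right h2 (h0 S)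
      calc (Fintype.card V : ℝ) ≤ _ := step1
        _ = _ := step2
        _ ≤ ∑ S : Finset V, 2 * w S := step3
        _ = 2 * t := by rw [← Finset.mul_sum, ht]
    linarith

/-! ### A 9-coloring of the plane with no monochromatic unit distance -/

/-- 9-coloring of the plane by 0.7×0.7 squares. -/
noncomputable def col (x : EuclideanSpace ℝ (Fin 2)) : ZMod 3 × ZMod 3 :=
  ((⌊x 0 / (7/10)⌋ : ℤ), (⌊x 1 / (7/10)⌋ : ℤ))

lemma col_ne {x y : EuclideanSpace ℝ (Fin 2)} (h : dist x y = 1) : col x ≠ col y := by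
  intro hxy
  have hdist : (x 0 - y 0)^2 + (x 1 - y 1)^2 = 1 := by
    have := h
    rw [EuclideanSpace.dist_eq, Fin.sum_univ_two] at this
    have h2 := congrArg (· ^ 2) this
    simp only [Real.sq_sqrt
      (by positivity : (0:ℝ) ≤ dist (x 0) (y 0) ^ 2 + dist (x 1) (y 1) ^ 2)] at h2
    rw [Real.dist_eq, Real.dist_eq, sq_abs, sq_abs] at h2
    simpa using h2
  have key : ∀ i : Fin 2, ((⌊x i / (7/10)⌋ : ℤ) : ZMod 3) = ((⌊y i / (7/10)⌋ : ℤ) : ZMod 3) →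
      (x i - y i)^2 ≤ 1 → (x i - y i)^2 < 49/100 := by
    intro i hcol hle
    have h1 : x i / (7/10) < ⌊x i / (7/10)⌋ + 1 := Int.lt_floor_add_one _
    have h2 : (⌊x i / (7/10)⌋ : ℝ) ≤ x i / (7/10) := Int.floor_le _
    have h3 : y i / (7/10) < ⌊y i / (7/10)⌋ + 1 := Int.lt_floor_add_one _
    have h4 : (⌊y i / (7/10)⌋ : ℝ) ≤ y i / (7/10) := Int.floor_le _
    by_cases heq : ⌊x i / (7/10)⌋ = ⌊y i / (7/10)⌋
    · rw [heq] at h1 h2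
      nlinarith
    · exfalso
      have hmod : ⌊x i / (7/10)⌋ ≡ ⌊y i / (7/10)⌋ [ZMOD 3] :=
        (ZMod.intCast_eq_intCast_iff _ _ _).mp hcol
      have hdvd : (3 : ℤ) ∣ (⌊y i / (7/10)⌋ - ⌊x i / (7/10)⌋) := Int.ModEq.dvd hmod
      have hne : ⌊y i / (7/10)⌋ - ⌊x i / (7/10)⌋ ≠ 0 := by
        intro hz; exact heq (by omega)
      have habs : (3 : ℤ) ≤ |⌊y i / (7/10)⌋ - ⌊x i / (7/10)⌋| :=
        Int.le_of_dvd (abs_pos.mpr hne) ((dvd_abs _ _).mpr hdvd)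
      have habsR : (3 : ℝ) ≤ |(⌊y i / (7/10)⌋ : ℝ) - (⌊x i / (7/10)⌋ : ℝ)| := by
        exact_mod_cast habs
      rcases le_or_gt ((⌊x i / (7/10)⌋ : ℝ)) ((⌊y i / (7/10)⌋ : ℝ)) with hle' | hlt'
      · rw [abs_of_nonneg (by linarith)] at habsR
        nlinarith
      · rw [abs_of_nonpos (by linarith)] at habsR
        nlinarith
  have hc0 := key 0 (congrArg Prod.fst hxy) (by nlinarith [sq_nonneg (x 1 - y 1)])
  have hc1 := key 1 (congrArg Prod.snd hxy) (by nlinarith [sq_nonneg (x 0 - y 0)])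
  nlinarith

/-! ### The Moser spindle -/

def mk2 (x y : ℝ) : EuclideanSpace ℝ (Fin 2) := !₂[x, y]

lemma dist_mk2 (x y x' y' : ℝ) :
    dist (mk2 x y) (mk2 x' y') = Real.sqrt ((x - x')^2 + (y - y')^2) := by
  rw [EuclideanSpace.dist_eq, Fin.sum_univ_two]
  simp [mk2, Real.dist_eq, sq_abs]

lemma mk2_ne_fst {x y x' y' : ℝ} (h : x ≠ x') : mk2 x y ≠ mk2 x' y' := by
  intro he
  exact h (by simpa [mk2] using congrArg (· 0) he)

lemma mk2_ne_snd {x y x' y' : ℝ} (h : y ≠ y') : mk2 x y ≠ mk2 x' y' := by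
  intro he
  exact h (by simpa [mk2] using congrArg (· 1) he)

/-- The seven vertices of the Moser spindle. -/
noncomputable def spin : Fin 7 → EuclideanSpace ℝ (Fin 2) :=
  let a := Real.sqrt 3
  let b := Real.sqrt 11
  ![mk2 0 0, mk2 1 0, mk2 (1/2) (a/2), mk2 (3/2) (a/2),
    mk2 (5/6) (b/6), mk2 (5/12 - a*b/12) ((b + 5*a)/12),
    mk2 (5/4 - a*b/12) ((3*b + 5*a)/12)]

/-- Adjacency of spindle indices. -/
def adjIdx (i j : Fin 7) : Prop :=
  ((i.val, j.val) ∈ [(0,1),(0,2),(1,2),(1,3),(2,3),(0,4),(0,5),(4,5),(4,6),(5,6),(3,6)]) ∨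
  ((j.val, i.val) ∈ [(0,1),(0,2),(1,2),(1,3),(2,3),(0,4),(0,5),(4,5),(4,6),(5,6),(3,6)])

instance (i j : Fin 7) : Decidable (adjIdx i j) := by unfold adjIdx; infer_instance

lemma spin_dist {i j : Fin 7} (h : adjIdx i j) : dist (spin i) (spin j) = 1 := by
  have ha : Real.sqrt 3 ^ 2 = 3 := Real.sq_sqrt (by norm_num)
  have hb : Real.sqrt 11 ^ 2 = 11 := Real.sq_sqrt (by norm_num)
  fin_cases i <;> fin_cases j <;>
    simp only [adjIdx, List.mem_cons, Prod.mk.injEq, List.not_mem_nil, or_false] at h <;>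
    first
    | omega
    | (simp only [spin]
       norm_num [Matrix.cons_val_succ, Matrix.cons_val_zero]
       rw [dist_mk2, Real.sqrt_eq_one]
       first
       | linear_combination (0 : ℝ) * ha
       | linear_combination (1/4 : ℝ) * ha
       | linear_combination (1/36 : ℝ) * hb
       | linear_combination (Real.sqrt 11 ^ 2 / 144 + 25/144) * ha + (1/36 : ℝ) * hb
       | linear_combination (1/144 + Real.sqrt 11 ^ 2 / 144) * ha + (1/12 : ℝ) * hb)

lemma spin_ne {i j : Fin 7} (hne : i ≠ j) : spin i ≠ spin j := by
  by_cases hadj : adjIdx i j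
  · intro he
    have h1 := spin_dist hadj
    rw [he, dist_self] at h1
    norm_num at h1
  · have ha : Real.sqrt 3 ^ 2 = 3 := Real.sq_sqrt (by norm_num)
    have hb : Real.sqrt 11 ^ 2 = 11 := Real.sq_sqrt (by norm_num)
    have ha3 : (0:ℝ) < Real.sqrt 3 := Real.sqrt_pos.mpr (by norm_num)
    have hb3 : (0:ℝ) < Real.sqrt 11 := Real.sqrt_pos.mpr (by norm_num)
    have hab : Real.sqrt 3 * Real.sqrt 11 < 9 := by nlinarith
    fin_cases i <;> fin_cases j <;>
      first
      | exact absurd rfl hne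
      | exact absurd (show adjIdx _ _ by decide) hadj
      | (simp only [spin]
         norm_num [Matrix.cons_val_succ, Matrix.cons_val_zero]
         refine mk2_ne_fst fun hx => ?_
         nlinarith)

lemma spin_inj : Function.Injective spin := fun i j h => by
  by_contra hne
  exact spin_ne hne h

lemma spin_triple : ∀ i j k : Fin 7, i ≠ j → i ≠ k → j ≠ k →
    adjIdx i j ∨ adjIdx i k ∨ adjIdx j k := by decide

/-- The Moser spindle as a finset of points of the plane. -/
noncomputable def spinSet : Finset (EuclideanSpace ℝ (Fin 2)) :=
  @Finset.image _ _ (Classical.decEq _) spin Finset.univ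

lemma mem_spinSet {x : EuclideanSpace ℝ (Fin 2)} : x ∈ spinSet ↔ ∃ i, spin i = x := by
  simp [spinSet]

lemma spinSet_card : spinSet.card = 7 := by
  letI : DecidableEq (EuclideanSpace ℝ (Fin 2)) := Classical.decEq _
  rw [show spinSet = Finset.image spin Finset.univ from rfl,
    Finset.card_image_of_injective _ spin_inj, Finset.card_univ, Fintype.card_fin]

/-! ### Main statement -/

lemma plane_upper (s : Finset (EuclideanSpace ℝ (Fin 2)))
    {iF : Fintype ↥(s : Set (EuclideanSpace ℝ (Fin 2)))}
    {iD : DecidableEq ↥(s : Set (EuclideanSpace ℝ (Fin 2)))} :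
    @fracChromNum _ iF iD (planeGraph.induce (s : Set (EuclideanSpace ℝ (Fin 2)))) ≤ 9 := by
  have := @fracChromNum_le_of_coloring _ iF iD
      (planeGraph.induce (s : Set (EuclideanSpace ℝ (Fin 2))))
      (Fintype.card (ZMod 3 × ZMod 3))
      (fun v => (Fintype.equivFin (ZMod 3 × ZMod 3)) (col v.val))
      (by
        intro u v hadj hcc
        have hd : dist (u : EuclideanSpace ℝ (Fin 2)) (v : EuclideanSpace ℝ (Fin 2)) = 1 := by simpa [planeGraph] using hadj
        exact col_ne hd ((Fintype.equivFin (ZMod 3 × ZMod 3)).injective hcc))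
  have hcard : (Fintype.card (ZMod 3 × ZMod 3) : ℝ) = 9 := by
    simp [Fintype.card_prod]
  rw [hcard] at this
  exact this

lemma plane_lower
    {iF : Fintype ↥(spinSet : Set (EuclideanSpace ℝ (Fin 2)))}
    {iD : DecidableEq ↥(spinSet : Set (EuclideanSpace ℝ (Fin 2)))} :
    (7:ℝ)/2 ≤ @fracChromNum _ iF iD
      (planeGraph.induce (spinSet : Set (EuclideanSpace ℝ (Fin 2)))) := by
  have h7 : @Fintype.card ↥(spinSet : Set (EuclideanSpace ℝ (Fin 2))) iF = 7 := by
    have e : ↥(spinSet : Set (EuclideanSpace ℝ (Fin 2))) ≃ ↥spinSet :=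
      Equiv.subtypeEquivRight (fun x => Finset.mem_coe)
    rw [Fintype.card_congr e, Fintype.card_coe, spinSet_card]
  have := @fracChromNum_ge_of_indep_le_two _ iF iD
      (planeGraph.induce (spinSet : Set (EuclideanSpace ℝ (Fin 2))))
      (by
        intro S hS
        by_contra hgt
        push_neg at hgt
        obtain ⟨a, b, c, haS, hbS, hcS, hab, hac, hbc⟩ := Finset.two_lt_card_iff.mp hgt
        obtain ⟨i, hi⟩ := mem_spinSet.mp (Finset.mem_coe.mp a.2)
        obtain ⟨j, hj⟩ := mem_spinSet.mp (Finset.mem_coe.mp b.2)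
        obtain ⟨k, hk⟩ := mem_spinSet.mp (Finset.mem_coe.mp c.2)
        have hij : i ≠ j := fun h => hab (Subtype.ext (hi ▸ hj ▸ h ▸ rfl))
        have hik : i ≠ k := fun h => hac (Subtype.ext (hi ▸ hk ▸ h ▸ rfl))
        have hjk : j ≠ k := fun h => hbc (Subtype.ext (hj ▸ hk ▸ h ▸ rfl))
        rcases spin_triple i j k hij hik hjk with h | h | h
        · exact hS a haS b hbS (by simpa [planeGraph] using (show dist (a : EuclideanSpace ℝ (Fin 2)) (b : _) = 1 by
            rw [← hi, ← hj]; exact spin_dist h))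
        · exact hS a haS c hcS (by simpa [planeGraph] using (show dist (a : EuclideanSpace ℝ (Fin 2)) (c : _) = 1 by
            rw [← hi, ← hk]; exact spin_dist h))
        · exact hS b hbS c hcS (by simpa [planeGraph] using (show dist (b : EuclideanSpace ℝ (Fin 2)) (c : _) = 1 by
            rw [← hj, ← hk]; exact spin_dist h)))
  rw [h7] at this
  norm_num at this
  linarith

/-- The fractional chromatic number of the unit-distance graph on `ℝ²` is at
least `7/2`. -/
theorem planeFracChrom_ge_seven_halves : 7 / 2 ≤ planeFracChrom := by
  unfold planeFracChrom
  refine le_trans ?_ (le_ciSup ?_ spinSet)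
  · exact plane_lower
  · refine ⟨9, ?_⟩
    rintro x ⟨s, rfl⟩
    exact plane_upper s
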